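/- Let P_1, …, P_N be homogeneous complex polynomials of degree k ≥ 2 in N variables such that Σ_{i=1}^N z_i P_i(z) = 0 for all z ∈ ℂ^N. Then the P_i have a nontrivial common root, i.e. there exists z ∈ ℂ^N \ {0} with P_1(z) = ⋯ = P_N(z) = 0. -/

import Mathlib

/- Auxiliary development: a hand-rolled Koszul complex with the
   depth-sensitivity theorem (every cycle in positive degree is a boundary,
   given a long enough regular sequence inside the ideal), plus a proof that
   powers of the variables form a regular sequence in `MvPolynomial`. -/

namespace Stmt3Aux

open MvPolynomial


variable {R : Type*} [CommRing R] {N : ℕ}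

def sgn (i : Fin N) (t : Finset (Fin N)) : R :=
  (-1 : R) ^ (t.filter (fun j => j < i)).card

def kd (x : Fin N → R) (f : Finset (Fin N) → R) (t : Finset (Fin N)) : R :=
  ∑ i ∈ tᶜ, sgn i t * x i * f (insert i t)

def emu (j : Fin N) (f : Finset (Fin N) → R) (t : Finset (Fin N)) : R :=
  if j ∈ t then sgn j (t.erase j) * f (t.erase j) else 0

lemma sgn_mul_self (i : Fin N) (t : Finset (Fin N)) : (sgn i t : R) * sgn i t = 1 := by
  rw [sgn, ← pow_add, ← two_mul, pow_mul]
  simp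

lemma sgn_insert {i : Fin N} (l : Fin N) {s : Finset (Fin N)} (hi : i ∉ s) :
    (sgn l (insert i s) : R) = (if i < l then -1 else 1) * sgn l s := by
  rw [sgn, sgn, Finset.filter_insert]
  split_ifs with h
  · rw [Finset.card_insert_of_notMem (by simp [hi]), pow_succ]
    ring
  · ring

lemma sgn_antisym {i l : Fin N} {s : Finset (Fin N)} (hil : i ≠ l)
    (hi : i ∉ s) (hl : l ∉ s) :
    (sgn i (insert l s) : R) * sgn l s + sgn l (insert i s) * sgn i s = 0 := by
  rw [sgn_insert i hl, sgn_insert l hi]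
  rcases lt_or_gt_of_ne hil with h | h
  · rw [if_pos h, if_neg (not_lt_of_gt h)]; ring
  · rw [if_neg (not_lt_of_gt h), if_pos h]; ring

lemma kd_kd (x : Fin N → R) (f : Finset (Fin N) → R) (t : Finset (Fin N)) :
    kd x (kd x f) t = 0 := by
  classical
  unfold kd
  have h1 : ∀ i ∈ tᶜ, sgn i t * x i * (∑ l ∈ (insert i t)ᶜ,
      sgn l (insert i t) * x l * f (insert l (insert i t)))
      = ∑ l ∈ tᶜ, (if l ≠ i then sgn i t * x i * (sgn l (insert i t) * x l *
          f (insert l (insert i t))) else 0) := by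
    intro i _
    rw [Finset.mul_sum, Finset.compl_insert, ← Finset.filter_ne', Finset.sum_filter]
  rw [Finset.sum_congr rfl h1, ← Finset.sum_product']
  refine Finset.sum_involution (fun p _ => Prod.swap p) ?_ ?_
    (fun p hp => by simp only [Finset.mem_product] at hp ⊢; exact ⟨hp.2, hp.1⟩) (by simp)
  · rintro ⟨i, l⟩ hp
    simp only [Finset.mem_product, Finset.mem_compl] at hp
    by_cases hne : l = i
    · simp [hne]
    · simp only [Prod.swap, ne_eq, hne, not_false_iff, if_true]
      rw [if_pos (show ¬ i = l from fun h => hne h.symm), Finset.insert_comm l i t]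
      linear_combination (x i * x l * f (insert i (insert l t))) *
        sgn_antisym (R := R) (show i ≠ l from fun h => hne h.symm) hp.1 hp.2
  · rintro ⟨i, l⟩ hp hne hsw
    have hli : l = i := (Prod.ext_iff.mp hsw).1
    exact hne (by simp [hli])


lemma sgn_insert_mul {i j : Fin N} {s : Finset (Fin N)} (hij : i ≠ j)
    (hi : i ∉ s) (hj : j ∉ s) :
    (sgn i (insert j s) : R) * sgn j (insert i s) = -(sgn i s * sgn j s) := by
  rw [sgn_insert (i := j) i hj, sgn_insert (i := i) j hi]
  rcases lt_or_gt_of_ne hij with h | h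
  · rw [if_pos h, if_neg (not_lt_of_gt h)]; ring
  · rw [if_neg (not_lt_of_gt h), if_pos h]; ring

lemma cartan (x : Fin N → R) (j : Fin N) (f : Finset (Fin N) → R) (t : Finset (Fin N)) :
    kd x (emu j f) t + emu j (kd x f) t = x j * f t := by
  classical
  by_cases hj : j ∈ t
  · -- j ∈ t
    set s := t.erase j with hs
    have hjs : j ∉ s := Finset.notMem_erase _ _
    have hts : insert j s = t := Finset.insert_erase hj
    have h2 : emu j (kd x f) t = x j * f t + ∑ i ∈ tᶜ,
        sgn j s * (sgn i s * x i * f (insert i s)) := by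
      rw [emu, if_pos hj, ← hs, kd]
      have hcompl : sᶜ = insert j tᶜ := by
        rw [hs, Finset.compl_erase]
      rw [hcompl, Finset.sum_insert (by simp [hj]), mul_add, Finset.mul_sum]
      congr 1
      rw [hts, ← mul_assoc, ← mul_assoc, sgn_mul_self, one_mul]
    have h1 : kd x (emu j f) t = ∑ i ∈ tᶜ,
        sgn i t * x i * (sgn j (insert i s) * f (insert i s)) := by
      rw [kd]
      refine Finset.sum_congr rfl (fun i hi => ?_)
      have hij : i ≠ j := fun h => (Finset.mem_compl.mp hi) (h ▸ hj)
      rw [emu, if_pos (Finset.mem_insert_of_mem hj),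
        Finset.erase_insert_of_ne hij, ← hs]
    have hsum : ∑ i ∈ tᶜ, (sgn i t * x i * (sgn j (insert i s) * f (insert i s))
        + sgn j s * (sgn i s * x i * f (insert i s))) = 0 := by
      refine Finset.sum_eq_zero (fun i hi => ?_)
      have hit : i ∉ t := Finset.mem_compl.mp hi
      have hij : i ≠ j := fun h => hit (h ▸ hj)
      have his : i ∉ s := fun h => hit (Finset.mem_of_mem_erase (hs ▸ h))
      have hsgnt : (sgn i t : R) = sgn i (insert j s) := by rw [hts]
      rw [hsgnt]
      linear_combination (x i * f (insert i s)) * sgn_insert_mul (R := R) hij his hjs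
    rw [h1, h2, add_comm (x j * f t), ← add_assoc, ← Finset.sum_add_distrib, hsum, zero_add]
  · -- j ∉ t
    rw [emu, if_neg hj, add_zero, kd]
    rw [Finset.sum_eq_single j]
    · rw [emu, if_pos (Finset.mem_insert_self j t), Finset.erase_insert hj]
      linear_combination (x j * f t) * sgn_mul_self (R := R) j t
    · intro i hi hij
      have : j ∉ insert i t := by
        simp only [Finset.mem_insert]
        rintro (h | h)
        · exact hij h.symm
        · exact hj h
      rw [emu, if_neg this, mul_zero]
    · intro h
      exact absurd (Finset.mem_compl.mpr hj) h


lemma kd_sum {ι : Type*} (x : Fin N → R) (u : Finset ι) (h : ι → Finset (Fin N) → R)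
    (t : Finset (Fin N)) :
    kd x (fun s => ∑ j ∈ u, h j s) t = ∑ j ∈ u, kd x (h j) t := by
  unfold kd
  simp only [Finset.mul_sum]
  rw [Finset.sum_comm]

lemma kd_mul_left (x : Fin N → R) (c : R) (f : Finset (Fin N) → R) (t : Finset (Fin N)) :
    kd x (fun s => c * f s) t = c * kd x f t := by
  unfold kd
  rw [Finset.mul_sum]
  exact Finset.sum_congr rfl fun i _ => by ring

lemma kd_sub (x : Fin N → R) (f g : Finset (Fin N) → R) (t : Finset (Fin N)) :
    kd x (fun s => f s - g s) t = kd x f t - kd x g t := by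
  unfold kd
  rw [← Finset.sum_sub_distrib]
  exact Finset.sum_congr rfl fun i _ => by ring

lemma kd_addmul (x : Fin N → R) (y : R) (a w : Finset (Fin N) → R) (t : Finset (Fin N)) :
    kd x (fun s => a s + y * w s) t = kd x a t + y * kd x w t := by
  unfold kd
  rw [Finset.mul_sum, ← Finset.sum_add_distrib]
  exact Finset.sum_congr rfl fun i _ => by ring

lemma kd_mem (x : Fin N → R) {J : Ideal R} {f : Finset (Fin N) → R}
    (hf : ∀ s, f s ∈ J) (t : Finset (Fin N)) : kd x f t ∈ J :=
  Ideal.sum_mem _ fun i _ => Ideal.mul_mem_left _ _ (hf _)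

lemma emu_mem {J : Ideal R} {f : Finset (Fin N) → R} (j : Fin N)
    (hf : ∀ s, f s ∈ J) (t : Finset (Fin N)) : emu j f t ∈ J := by
  unfold emu
  split_ifs
  · exact Ideal.mul_mem_left _ _ (hf _)
  · exact Ideal.zero_mem _

def RegSeq (J : Ideal R) : List R → Prop
  | [] => True
  | y :: ys => (∀ a, y * a ∈ J → a ∈ J) ∧ RegSeq (J ⊔ Ideal.span {y}) ys

lemma koszul_vanish (x : Fin N → R) (ys : List R) : ∀ (J : Ideal R),
    (∀ y ∈ ys, y ∈ Ideal.span (Set.range x)) → RegSeq J ys →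
    ∀ f : Finset (Fin N) → R, (∀ t : Finset (Fin N), t.card + ys.length ≤ N → f t = 0) →
    (∀ t, kd x f t ∈ J) → ∃ u, ∀ t, f t - kd x u t ∈ J := by
  induction ys with
  | nil =>
    intro J _ _ f hsupp _
    refine ⟨fun _ => 0, fun t => ?_⟩
    have hft : f t = 0 := hsupp t (by
      simpa using (Finset.card_le_univ t).trans_eq (by simp))
    have : kd x (fun _ => (0 : R)) t = 0 := by simp [kd]
    rw [hft, this, sub_zero]
    exact Ideal.zero_mem _
  | cons y ys ih =>
    intro J hmem hreg f hsupp hcyc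
    have hy : y ∈ Ideal.span (Set.range x) := hmem y (by simp)
    have hys : ∀ z ∈ ys, z ∈ Ideal.span (Set.range x) := fun z hz => hmem z (by simp [hz])
    obtain ⟨hregy, hregs⟩ := hreg
    obtain ⟨c, hc⟩ := (Submodule.mem_span_range_iff_exists_fun R).mp hy
    set g : Finset (Fin N) → R := fun s => ∑ j, c j * emu j f s with hg
    have hkey : ∀ t, kd x g t = y * f t - ∑ j, c j * emu j (kd x f) t := by
      intro t
      rw [hg, kd_sum]
      have hterm : ∀ j : Fin N, kd x (fun s => c j * emu j f s) t
          = c j * (x j * f t) - c j * emu j (kd x f) t := by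
        intro j
        rw [kd_mul_left]
        linear_combination c j * cartan x j f t
      rw [Finset.sum_congr rfl (fun j _ => hterm j), Finset.sum_sub_distrib]
      congr 1
      have : (∑ j, c j * x j) = y := by
        simpa [smul_eq_mul] using hc
      rw [← this, Finset.sum_mul]
      exact Finset.sum_congr rfl fun j _ => by ring
    have hgsupp : ∀ t : Finset (Fin N), t.card + ys.length ≤ N → g t = 0 := by
      intro t ht
      rw [hg]
      refine Finset.sum_eq_zero fun j _ => ?_
      rw [emu]
      split_ifs with hjt
      · have h1 : 1 ≤ t.card := Finset.card_pos.mpr ⟨j, hjt⟩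
        have hcard : (t.erase j).card = t.card - 1 := Finset.card_erase_of_mem hjt
        rw [hsupp (t.erase j) (by rw [hcard]; simp only [List.length_cons] at *; omega)]
        ring
      · ring
    have hgcyc : ∀ t, kd x g t ∈ J ⊔ Ideal.span {y} := by
      intro t
      rw [hkey t]
      refine Submodule.sub_mem _ ?_ ?_
      · exact Ideal.mem_sup_right (Ideal.mem_span_singleton'.mpr ⟨f t, mul_comm _ _⟩)
      · exact Ideal.mem_sup_left (Ideal.sum_mem _ fun j _ =>
          Ideal.mul_mem_left _ _ (emu_mem j hcyc t))
    obtain ⟨G, hG⟩ := ih (J ⊔ Ideal.span {y}) hys hregs g hgsupp hgcyc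
    have hdec : ∀ t, ∃ a w, a ∈ J ∧ g t - kd x G t = a + y * w := by
      intro t
      obtain ⟨a, ha, b, hb, hab⟩ := Submodule.mem_sup.mp (hG t)
      obtain ⟨w, hw⟩ := Ideal.mem_span_singleton'.mp hb
      exact ⟨a, w, ha, by rw [← hab, ← hw]; ring⟩
    choose af wf haf hafw using hdec
    refine ⟨wf, fun t => ?_⟩
    apply hregy
    have he : (fun s => g s - kd x G s) = fun s => af s + y * wf s := funext fun s => hafw s
    have h4 : kd x (fun s => g s - kd x G s) t = kd x g t := by
      rw [kd_sub, kd_kd, sub_zero]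
    rw [he, kd_addmul] at h4
    have h5 : y * (f t - kd x wf t) = kd x af t + (∑ j, c j * emu j (kd x f) t) := by
      have hk := hkey t
      rw [← h4] at hk
      linear_combination -hk
    rw [h5]
    exact Ideal.add_mem _ (kd_mem x haf t)
      (Ideal.sum_mem _ fun j _ => Ideal.mul_mem_left _ _ (emu_mem j hcyc t))


variable {N : ℕ} (D : Fin N → ℕ)

local notation "S" => MvPolynomial (Fin N) ℂ

noncomputable def JT (T : Finset (Fin N)) : Ideal S :=
  Ideal.span ((fun i => (X i : S) ^ D i) '' ↑T)

lemma coeff_eq_zero_of_mem_JT {T : Finset (Fin N)} {p : S} (hp : p ∈ JT D T)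
    {m : Fin N →₀ ℕ} (hm : ∀ i ∈ T, m i < D i) : coeff m p = 0 := by
  classical
  induction hp using Submodule.span_induction generalizing m with
  | mem q hq =>
    obtain ⟨i, hi, rfl⟩ := hq
    simp only []
    rw [X_pow_eq_monomial, coeff_monomial]
    split_ifs with h
    · exfalso
      have := hm i hi
      rw [← h] at this
      simp at this
    · rfl
  | zero => simp
  | add q r _ _ ihq ihr => rw [coeff_add, ihq hm, ihr hm, add_zero]
  | smul r q _ ihq =>
    rw [smul_eq_mul, coeff_mul]
    refine Finset.sum_eq_zero fun uv huv => ?_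
    have hle : uv.2 ≤ m := by
      rw [Finset.HasAntidiagonal.mem_antidiagonal] at huv
      calc uv.2 ≤ uv.1 + uv.2 := le_add_self
      _ = m := huv
    rw [ihq (fun i hi => lt_of_le_of_lt (by exact hle i) (hm i hi)), mul_zero]

lemma mem_JT_of_coeff {T : Finset (Fin N)} {p : S}
    (h : ∀ m : Fin N →₀ ℕ, (∀ i ∈ T, m i < D i) → coeff m p = 0) : p ∈ JT D T := by
  classical
  rw [as_sum p]
  refine Ideal.sum_mem _ fun v hv => ?_
  by_cases hcl : ∀ i ∈ T, v i < D i
  · rw [h v hcl]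
    simp
  · push_neg at hcl
    obtain ⟨i, hi, hDi⟩ := hcl
    have hle : Finsupp.single i (D i) ≤ v := Finsupp.single_le_iff.mpr hDi
    have : (monomial v) (coeff v p)
        = (X i : S) ^ D i * (monomial (v - Finsupp.single i (D i))) (coeff v p) := by
      rw [X_pow_eq_monomial, monomial_mul, one_mul, add_tsub_cancel_of_le hle]
    rw [this]
    exact Ideal.mul_mem_right _ _ (Ideal.subset_span ⟨i, hi, rfl⟩)

lemma JT_regular {T : Finset (Fin N)} {l : Fin N} (hl : l ∉ T) {a : S}
    (h : (X l : S) ^ D l * a ∈ JT D T) : a ∈ JT D T := by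
  classical
  refine mem_JT_of_coeff D fun m hm => ?_
  have hclean : ∀ i ∈ T, (m + Finsupp.single l (D l)) i < D i := by
    intro i hi
    have hne : l ≠ i := fun hli => hl (hli ▸ hi)
    rw [Finsupp.add_apply, Finsupp.single_apply, if_neg hne, add_zero]
    exact hm i hi
  have h0 := coeff_eq_zero_of_mem_JT D h hclean
  rw [X_pow_eq_monomial, mul_comm, coeff_mul_monomial'] at h0
  rw [if_pos (le_add_self)] at h0
  rwa [add_tsub_cancel_right, mul_one] at h0

lemma JT_sup (T : Finset (Fin N)) (l : Fin N) :
    JT D T ⊔ Ideal.span {(X l : S) ^ D l} = JT D (insert l T) := by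
  rw [JT, JT, Finset.coe_insert, Set.image_insert_eq, Ideal.span_insert, sup_comm]

lemma regseq_JT : ∀ (rest : List (Fin N)) (T : Finset (Fin N)), rest.Nodup →
    (∀ i ∈ rest, i ∉ T) → RegSeq (JT D T) (rest.map fun i => (X i : S) ^ D i) := by
  intro rest
  induction rest with
  | nil => intro T _ _; trivial
  | cons l rest ih =>
    intro T hnd hmem
    obtain ⟨hl, hnd'⟩ := List.nodup_cons.mp hnd
    refine ⟨fun a ha => JT_regular D (hmem l (by simp)) ha, ?_⟩
    rw [JT_sup]
    refine ih (insert l T) hnd' fun i hi => ?_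
    rw [Finset.mem_insert]
    rintro (h | h)
    · exact hl (h ▸ hi)
    · exact hmem i (by simp [hi]) h


lemma degree_le_of_le {σ : Type*} {v m : σ →₀ ℕ} (h : v ≤ m) : v.degree ≤ m.degree := by
  rw [Finsupp.degree_apply, Finsupp.degree_apply]
  have hsub : v.support ⊆ m.support := fun i hi => by
    rw [Finsupp.mem_support_iff] at hi ⊢
    intro hmi
    exact hi (Nat.le_zero.mp (hmi ▸ (Finsupp.le_def.mp h) i))
  calc ∑ i ∈ v.support, v i ≤ ∑ i ∈ m.support, v i :=
        Finset.sum_le_sum_of_subset hsub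
    _ ≤ ∑ i ∈ m.support, m i := Finset.sum_le_sum fun i _ => (Finsupp.le_def.mp h) i


end Stmt3Aux

open MvPolynomial Stmt3Aux

theorem stmt3 (N k : ℕ) (hN : 1 ≤ N) (hk : 2 ≤ k)
    (P : Fin N → MvPolynomial (Fin N) ℂ)
    (hhom : ∀ i, (P i).IsHomogeneous k)
    (hrel : ∀ z : Fin N → ℂ, ∑ i, z i * MvPolynomial.eval z (P i) = 0) :
    ∃ z : Fin N → ℂ, z ≠ 0 ∧ ∀ i, MvPolynomial.eval z (P i) = 0 := by
  classical
  by_contra hno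
  push_neg at hno
  have hzero : ∀ z : Fin N → ℂ, (∀ i, MvPolynomial.eval z (P i) = 0) → z = 0 := by
    intro z hz
    by_contra hz0
    obtain ⟨i, hi⟩ := hno z hz0
    exact hi (hz i)
  -- the polynomial identity ∑ X i * P i = 0
  have hF : (∑ i, (X i : MvPolynomial (Fin N) ℂ) * P i) = 0 := by
    apply MvPolynomial.funext
    intro z
    rw [map_sum, map_zero]
    calc ∑ i, MvPolynomial.eval z (X i * P i)
        = ∑ i, z i * MvPolynomial.eval z (P i) := by
          refine Finset.sum_congr rfl fun i _ => ?_
          rw [map_mul, eval_X]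
      _ = 0 := hrel z
  set I : Ideal (MvPolynomial (Fin N) ℂ) := Ideal.span (Set.range P) with hI
  -- zero locus of I is {0}
  have hzl : MvPolynomial.zeroLocus ℂ I = {0} := by
    ext z
    simp only [Set.mem_singleton_iff]
    rw [MvPolynomial.mem_zeroLocus_iff]
    constructor
    · intro h
      exact hzero z fun i => by
        have := h (P i) (Ideal.subset_span ⟨i, rfl⟩); exact this
    · rintro rfl p hp
      induction hp using Submodule.span_induction with
      | mem q hq =>
        obtain ⟨i, rfl⟩ := hq
        have h0 : coeff 0 (P i) = 0 := (hhom i).coeff_eq_zero (by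
          rw [map_zero]; omega)
        show eval (0 : Fin N → ℂ) (P i) = 0
        calc (eval (0 : Fin N → ℂ)) (P i)
            = constantCoeff (P i) := DFunLike.congr_fun MvPolynomial.eval_zero (P i)
          _ = coeff 0 (P i) := congrFun MvPolynomial.constantCoeff_eq (P i)
          _ = 0 := h0
      | zero => simp
      | add q r _ _ h1 h2 => rw [map_add, h1, h2, add_zero]
      | smul c q _ h1 => rw [smul_eq_mul, map_mul, h1, mul_zero]
  -- Nullstellensatz: X i ∈ radical I
  have hXrad : ∀ i, (X i : MvPolynomial (Fin N) ℂ) ∈ I.radical := by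
    intro i
    rw [← MvPolynomial.vanishingIdeal_zeroLocus_eq_radical (K := ℂ) I, hzl]
    rw [MvPolynomial.mem_vanishingIdeal_singleton_iff, aeval_X]
    rfl
  have hXD : ∀ i, ∃ d : ℕ, (X i : MvPolynomial (Fin N) ℂ) ^ (d + 1) ∈ I := by
    intro i
    obtain ⟨n, hn⟩ := Ideal.mem_radical_iff.mp (hXrad i)
    exact ⟨n, by rw [pow_succ, mul_comm]; exact Ideal.mul_mem_left _ _ hn⟩
  choose d hd using hXD
  set D : Fin N → ℕ := fun i => d i + 1 with hD
  -- the Koszul cycle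
  set f₀ : Finset (Fin N) → MvPolynomial (Fin N) ℂ :=
    fun t => ∑ i, if t = {i} then (X i : MvPolynomial (Fin N) ℂ) else 0 with hf₀
  have hf₀singleton : ∀ i, f₀ {i} = X i := by
    intro i
    show (∑ j, if ({i} : Finset (Fin N)) = {j} then (X j : MvPolynomial (Fin N) ℂ) else 0) = X i
    rw [Finset.sum_eq_single i (fun j _ hj => if_neg (by
      simp only [Finset.singleton_inj]; exact fun h => hj h.symm)) (fun h => absurd (Finset.mem_univ i) h)]
    rw [if_pos rfl]
  have hf₀card : ∀ t : Finset (Fin N), t.card ≠ 1 → f₀ t = 0 := by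
    intro t ht
    show (∑ j, if t = {j} then (X j : MvPolynomial (Fin N) ℂ) else 0) = 0
    refine Finset.sum_eq_zero fun i _ => if_neg (fun h => ht (by rw [h]; simp))
  have hsupp : ∀ t : Finset (Fin N),
      t.card + ((List.finRange N).map fun i => (X i : MvPolynomial (Fin N) ℂ) ^ D i).length ≤ N
      → f₀ t = 0 := by
    intro t ht
    rw [List.length_map, List.length_finRange] at ht
    refine hf₀card t (fun hc => ?_)
    omega
  have hcyc : ∀ t, kd P f₀ t ∈ (⊥ : Ideal (MvPolynomial (Fin N) ℂ)) := by
    intro t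
    rw [Ideal.mem_bot]
    by_cases ht : t = ∅
    · subst ht
      rw [kd]
      calc ∑ i ∈ (∅ : Finset (Fin N))ᶜ, sgn i ∅ * P i * f₀ (insert i ∅)
          = ∑ i, X i * P i := by
            rw [show ((∅ : Finset (Fin N))ᶜ = Finset.univ) by simp]
            refine Finset.sum_congr rfl fun i _ => ?_
            rw [show insert i (∅ : Finset (Fin N)) = {i} from rfl, hf₀singleton i]
            rw [show (sgn i (∅ : Finset (Fin N)) : MvPolynomial (Fin N) ℂ) = 1 by
              simp [sgn]]
            ring
        _ = 0 := hF
    · rw [kd]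
      refine Finset.sum_eq_zero fun i hi => ?_
      have : f₀ (insert i t) = 0 := by
        refine hf₀card _ ?_
        rw [Finset.card_insert_of_notMem (Finset.mem_compl.mp hi)]
        have : t.card ≠ 0 := fun h => ht (Finset.card_eq_zero.mp h)
        omega
      rw [this, mul_zero]
  -- apply the Koszul vanishing theorem
  have hbot : JT D (∅ : Finset (Fin N)) = ⊥ := by simp [JT]
  have hreg : RegSeq (⊥ : Ideal (MvPolynomial (Fin N) ℂ))
      ((List.finRange N).map fun i => (X i : MvPolynomial (Fin N) ℂ) ^ D i) := by
    rw [← hbot]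
    exact regseq_JT D (List.finRange N) ∅ (List.nodup_finRange N) (by simp)
  have hmemI : ∀ y ∈ (List.finRange N).map fun i => (X i : MvPolynomial (Fin N) ℂ) ^ D i,
      y ∈ Ideal.span (Set.range P) := by
    intro y hy
    rw [List.mem_map] at hy
    obtain ⟨i, _, rfl⟩ := hy
    exact hd i
  obtain ⟨u, hu⟩ := koszul_vanish P _ ⊥ hmemI hreg f₀ hsupp hcyc
  -- extract : X i ∈ I
  have hXI : (X (⟨0, hN⟩ : Fin N) : MvPolynomial (Fin N) ℂ) ∈ I := by
    set i₀ : Fin N := ⟨0, hN⟩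
    have h1 := hu {i₀}
    rw [Ideal.mem_bot, sub_eq_zero, hf₀singleton i₀] at h1
    rw [h1, kd]
    refine Ideal.sum_mem _ fun l _ => ?_
    rw [mul_assoc]
    exact Ideal.mul_mem_left _ _
      (Ideal.mul_mem_right _ _ (Ideal.subset_span ⟨l, rfl⟩))
  -- degree contradiction
  obtain ⟨c, hc⟩ := (Submodule.mem_span_range_iff_exists_fun (MvPolynomial (Fin N) ℂ)).mp
    (by rw [hI] at hXI; exact hXI)
  have hcoeff := congrArg (MvPolynomial.coeff (Finsupp.single (⟨0, hN⟩ : Fin N) 1)) hc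
  rw [MvPolynomial.coeff_X] at hcoeff
  have hzero' : MvPolynomial.coeff (Finsupp.single (⟨0, hN⟩ : Fin N) 1)
      (∑ j, c j • P j) = 0 := by
    rw [MvPolynomial.coeff_sum]
    refine Finset.sum_eq_zero fun j _ => ?_
    rw [smul_eq_mul, MvPolynomial.coeff_mul]
    refine Finset.sum_eq_zero fun uv huv => ?_
    have hle : uv.2 ≤ Finsupp.single (⟨0, hN⟩ : Fin N) 1 := by
      rw [Finset.HasAntidiagonal.mem_antidiagonal] at huv
      calc uv.2 ≤ uv.1 + uv.2 := le_add_self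
        _ = _ := huv
    have hdeg : (uv.2).degree ≤ 1 := by
      have h1 := degree_le_of_le hle
      have h2 : (Finsupp.single (⟨0, hN⟩ : Fin N) 1).degree = 1 := by
        rw [Finsupp.degree_apply, Finsupp.support_single_ne_zero _ one_ne_zero]
        simp
      rwa [h2] at h1
    rw [(hhom j).coeff_eq_zero (by omega), mul_zero]
  rw [hzero'] at hcoeff
  exact zero_ne_one (hcoeff.trans (if_pos rfl))
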